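/- Let L be the lattice Z^3 modulo Z(1,1,1) and L^∨ = {(x1,x2,x3) ∈ Z^3 : x1+x2+x3 = 0}. Let W be the symmetric group S_3 acting on L^∨ by permuting coordinates, let μ ∈ L^∨, and let α = (1,-1,0). Let p_α : R^3 → R^3 be the projection along α given by p_α(x1,x2,x3) = ((x1+x2)/2, (x1+x2)/2, x3). Then every point of p_α(L^∨) lying in p_α(Conv(Wμ)) is the image under p_α of a point of L^∨ ∩ Conv(Wμ), where Conv denotes convex hull in the hyperplane {x1+x2+x3=0} of R^3. -/

import Mathlib

open Finset
set_option maxHeartbeats 1000000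

def orb (m : Fin 3 → ℝ) : Set (Fin 3 → ℝ) :=
  {x | ∃ σ : Equiv.Perm (Fin 3), ∀ i, x i = m (σ i)}

lemma comb_mem (S : Set (Fin 3 → ℝ)) (v1 v2 v3 v4 : Fin 3 → ℝ)
    (h1 : v1 ∈ S) (h2 : v2 ∈ S) (h3 : v3 ∈ S) (h4 : v4 ∈ S)
    (a b c d : ℝ) (ha : 0 ≤ a) (hb : 0 ≤ b) (hc : 0 ≤ c) (hd : 0 ≤ d)
    (hsum : a + b + c + d = 1) :
    a • v1 + b • v2 + c • v3 + d • v4 ∈ convexHull ℝ S := by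
  have := (convex_convexHull ℝ S).sum_mem (t := (Finset.univ : Finset (Fin 4)))
    (w := ![a,b,c,d]) (z := ![v1,v2,v3,v4])
    (by intro i _; fin_cases i <;> assumption)
    (by simp [Fin.sum_univ_four]; linarith)
    (by intro i _; fin_cases i <;> exact subset_convexHull ℝ S ‹_›)
  simpa [Fin.sum_univ_four] using this

lemma sorted_core (m1 m2 m3 x0 x1 x2 : ℝ)
    (hm : m1 + m2 + m3 = 0) (h12 : m2 ≤ m1) (h23 : m3 ≤ m2)
    (hx : x0 + x1 + x2 = 0) (hs1 : x1 ≤ x0) (hs2 : x2 ≤ x1)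
    (hub : x0 ≤ m1) (hlb : m3 ≤ x2) :
    ![x0, x1, x2] ∈ convexHull ℝ (orb ![m1, m2, m3]) := by
  have hv1 : ![m1,m2,m3] ∈ orb ![m1,m2,m3] :=
    ⟨Equiv.refl _, by intro i; rfl⟩
  have hv2 : ![m3,m2,m1] ∈ orb ![m1,m2,m3] :=
    ⟨⟨![2,1,0], ![2,1,0], by decide, by decide⟩, by intro i; fin_cases i <;> rfl⟩
  have hv3 : ![m1,m3,m2] ∈ orb ![m1,m2,m3] :=
    ⟨⟨![0,2,1], ![0,2,1], by decide, by decide⟩, by intro i; fin_cases i <;> rfl⟩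
  have hv4 : ![m3,m1,m2] ∈ orb ![m1,m2,m3] :=
    ⟨⟨![2,0,1], ![1,2,0], by decide, by decide⟩, by intro i; fin_cases i <;> rfl⟩
  have hw3 : ![m2,m1,m3] ∈ orb ![m1,m2,m3] :=
    ⟨⟨![1,0,2], ![1,0,2], by decide, by decide⟩, by intro i; fin_cases i <;> rfl⟩
  have hw4 : ![m2,m3,m1] ∈ orb ![m1,m2,m3] :=
    ⟨⟨![1,2,0], ![2,0,1], by decide, by decide⟩, by intro i; fin_cases i <;> rfl⟩
  have hx2 : x2 = -x0 - x1 := by linarith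
  subst hx2
  have hm3 : m3 = -m1 - m2 := by linarith
  subst hm3
  by_cases hdeg : m1 ≤ -m1 - m2
  · have e1 : m1 = 0 := by linarith
    have e2 : m2 = 0 := by linarith
    have ex0 : x0 = 0 := by linarith
    have ex1 : x1 = 0 := by linarith
    have : (![x0, x1, -x0 - x1] : Fin 3 → ℝ) = ![m1, m2, -m1 - m2] := by
      funext i; fin_cases i <;> simp [e1, e2, ex0, ex1]
    rw [this]
    exact subset_convexHull ℝ _ hv1
  push_neg at hdeg
  have hPpos : (0:ℝ) < 2*m1 + m2 := by linarith
  have hPne : (2*m1 + m2) ≠ 0 := ne_of_gt hPpos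
  by_cases hA : x1 ≤ m2
  · -- case A
    by_cases hQ : 2*m2 + x0 = 0
    · have ex1 : x1 = m2 := by linarith
      have hmem := comb_mem _ _ _ _ _ hv1 hv2 hv3 hv4
        ((x0 + m1 + m2) / (2*m1 + m2)) ((m1 - x0) / (2*m1 + m2)) 0 0
        (by apply div_nonneg <;> linarith) (by apply div_nonneg <;> linarith)
        le_rfl le_rfl (by rw [add_zero, add_zero, ← add_div, div_eq_one_iff_eq hPne]; ring)
      have : (![x0, x1, -x0 - x1] : Fin 3 → ℝ) =
          ((x0 + m1 + m2) / (2*m1 + m2)) • ![m1,m2,-m1-m2]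
          + ((m1 - x0) / (2*m1 + m2)) • ![-m1-m2,m2,m1]
          + (0:ℝ) • ![m1,-m1-m2,m2] + (0:ℝ) • ![-m1-m2,m1,m2] := by
        funext i; fin_cases i <;> simp [ex1] <;> field_simp [show m1 * 2 + m2 ≠ 0 by contrapose! hPne; linarith] <;> ring
      rw [this]; exact hmem
    · have hQpos : 0 < 2*m2 + x0 := by
        rcases lt_or_gt_of_ne hQ with h | h
        · exfalso; linarith
        · exact h
      have hQne : (2*m2 + x0) ≠ 0 := ne_of_gt hQpos
      have hr0 : 0 ≤ (m2 - (-x0 - x1)) / (2*m2 + x0) := by apply div_nonneg <;> linarith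
      have hr1 : (m2 - (-x0 - x1)) / (2*m2 + x0) ≤ 1 := by
        rw [div_le_one hQpos]; linarith
      have hs0 : 0 ≤ (m1 - x0) / (2*m1 + m2) := by apply div_nonneg <;> linarith
      have hs1' : (m1 - x0) / (2*m1 + m2) ≤ 1 := by rw [div_le_one hPpos]; linarith
      set r := (m2 - (-x0 - x1)) / (2*m2 + x0) with hrdef
      set s := (m1 - x0) / (2*m1 + m2) with hsdef
      have hmem := comb_mem _ _ _ _ _ hv1 hv2 hv3 hv4
        (r*(1-s)) (r*s) ((1-r)*(1-s)) ((1-r)*s)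
        (by nlinarith) (by nlinarith) (by nlinarith) (by nlinarith) (by ring)
      have : (![x0, x1, -x0 - x1] : Fin 3 → ℝ) =
          (r*(1-s)) • ![m1,m2,-m1-m2] + (r*s) • ![-m1-m2,m2,m1]
          + ((1-r)*(1-s)) • ![m1,-m1-m2,m2] + ((1-r)*s) • ![-m1-m2,m1,m2] := by
        funext i; fin_cases i <;>
          simp only [hrdef, hsdef, Pi.add_apply, Pi.smul_apply, smul_eq_mul,
            Matrix.cons_val_zero, Matrix.cons_val_one, Matrix.head_cons,
            Matrix.cons_val_two, Matrix.tail_cons, Fin.isValue, Fin.mk_one, Fin.zero_eta, Fin.reduceFinMk] <;> field_simp [show m1 * 2 + m2 ≠ 0 by contrapose! hPne; linarith, show m2 * 2 + x0 ≠ 0 by contrapose! hQne; linarith] <;> ring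
      rw [this]; exact hmem
  · -- case B
    push_neg at hA
    have hQpos : 0 < -(2*m2) - (-x0 - x1) := by linarith
    have hQne : (-(2*m2) - (-x0 - x1)) ≠ 0 := ne_of_gt hQpos
    have hr0 : 0 ≤ (x0 - m2) / (-(2*m2) - (-x0 - x1)) := by apply div_nonneg <;> linarith
    have hr1 : (x0 - m2) / (-(2*m2) - (-x0 - x1)) ≤ 1 := by
      rw [div_le_one hQpos]; linarith
    have hs0 : 0 ≤ ((-x0 - x1) + m1 + m2) / (2*m1 + m2) := by apply div_nonneg <;> linarith
    have hs1' : ((-x0 - x1) + m1 + m2) / (2*m1 + m2) ≤ 1 := by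
      rw [div_le_one hPpos]; linarith
    set r := (x0 - m2) / (-(2*m2) - (-x0 - x1)) with hrdef
    set s := ((-x0 - x1) + m1 + m2) / (2*m1 + m2) with hsdef
    have hmem := comb_mem _ _ _ _ _ hv1 hv2 hw3 hw4
      (r*(1-s)) (r*s) ((1-r)*(1-s)) ((1-r)*s)
      (by nlinarith) (by nlinarith) (by nlinarith) (by nlinarith) (by ring)
    have : (![x0, x1, -x0 - x1] : Fin 3 → ℝ) =
        (r*(1-s)) • ![m1,m2,-m1-m2] + (r*s) • ![-m1-m2,m2,m1]
        + ((1-r)*(1-s)) • ![m2,m1,-m1-m2] + ((1-r)*s) • ![m2,-m1-m2,m1] := by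
      funext i; fin_cases i <;>
        simp only [hrdef, hsdef, Pi.add_apply, Pi.smul_apply, smul_eq_mul,
          Matrix.cons_val_zero, Matrix.cons_val_one, Matrix.head_cons,
          Matrix.cons_val_two, Matrix.tail_cons, Fin.isValue, Fin.mk_one, Fin.zero_eta, Fin.reduceFinMk] <;> field_simp [show m1 * 2 + m2 ≠ 0 by contrapose! hPne; linarith, show -(m2 * 2) - (-x0 - x1) ≠ 0 by contrapose! hQne; linarith] <;> ring
    rw [this]; exact hmem

lemma orb_perm_eq (m : Fin 3 → ℝ) (τ : Equiv.Perm (Fin 3)) :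
    orb (fun i => m (τ i)) = orb m := by
  ext x
  constructor
  · rintro ⟨σ, h⟩; exact ⟨σ.trans τ, h⟩
  · rintro ⟨σ, h⟩
    exact ⟨σ.trans τ⁻¹, by intro i; simpa using h i⟩

lemma hull_perm (m x : Fin 3 → ℝ) (ρ : Equiv.Perm (Fin 3))
    (h : (fun i => x (ρ i)) ∈ convexHull ℝ (orb m)) :
    x ∈ convexHull ℝ (orb m) := by
  set T : (Fin 3 → ℝ) →ₗ[ℝ] (Fin 3 → ℝ) := LinearMap.funLeft ℝ ℝ (⇑ρ.symm) with hT
  have himg : T '' (orb m) ⊆ orb m := by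
    rintro _ ⟨y, ⟨σ, hy⟩, rfl⟩
    refine ⟨ρ.symm.trans σ, fun i => ?_⟩
    simpa [hT, LinearMap.funLeft_apply] using hy (ρ.symm i)
  have hx : x = T (fun i => x (ρ i)) := by
    funext i
    simp [hT, LinearMap.funLeft_apply]
  rw [hx]
  have := Set.mem_image_of_mem T h
  rw [T.image_convexHull] at this
  exact convexHull_mono himg this

lemma hull_perm' (m x : Fin 3 → ℝ) (ρ : Equiv.Perm (Fin 3))
    (h : ![x (ρ 0), x (ρ 1), x (ρ 2)] ∈ convexHull ℝ (orb m)) :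
    x ∈ convexHull ℝ (orb m) := by
  apply hull_perm m x ρ
  have : (fun i => x (ρ i)) = ![x (ρ 0), x (ρ 1), x (ρ 2)] := by
    funext i; fin_cases i <;> rfl
  rw [this]; exact h

lemma box_sub_hull (m1 m2 m3 : ℝ) (hm : m1 + m2 + m3 = 0)
    (h12 : m2 ≤ m1) (h23 : m3 ≤ m2)
    (x : Fin 3 → ℝ) (hx : x 0 + x 1 + x 2 = 0)
    (hlb : ∀ i, m3 ≤ x i) (hub : ∀ i, x i ≤ m1) :
    x ∈ convexHull ℝ (orb ![m1, m2, m3]) := by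
  have h0l := hlb 0; have h1l := hlb 1; have h2l := hlb 2
  have h0u := hub 0; have h1u := hub 1; have h2u := hub 2
  rcases le_total (x 0) (x 1) with h01 | h01 <;>
  rcases le_total (x 0) (x 2) with h02 | h02 <;>
  rcases le_total (x 1) (x 2) with h12' | h12'
  · exact hull_perm' _ _ ⟨![2,1,0],![2,1,0],by decide,by decide⟩
      (sorted_core m1 m2 m3 (x 2) (x 1) (x 0) hm h12 h23 (by linarith) (by linarith)
        (by linarith) (by linarith) (by linarith))
  · exact hull_perm' _ _ ⟨![1,2,0],![2,0,1],by decide,by decide⟩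
      (sorted_core m1 m2 m3 (x 1) (x 2) (x 0) hm h12 h23 (by linarith) (by linarith)
        (by linarith) (by linarith) (by linarith))
  · exact hull_perm' _ _ ⟨![1,2,0],![2,0,1],by decide,by decide⟩
      (sorted_core m1 m2 m3 (x 1) (x 2) (x 0) hm h12 h23 (by linarith) (by linarith)
        (by linarith) (by linarith) (by linarith))
  · exact hull_perm' _ _ ⟨![1,0,2],![1,0,2],by decide,by decide⟩
      (sorted_core m1 m2 m3 (x 1) (x 0) (x 2) hm h12 h23 (by linarith) (by linarith)
        (by linarith) (by linarith) (by linarith))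
  · exact hull_perm' _ _ ⟨![2,0,1],![1,2,0],by decide,by decide⟩
      (sorted_core m1 m2 m3 (x 2) (x 0) (x 1) hm h12 h23 (by linarith) (by linarith)
        (by linarith) (by linarith) (by linarith))
  · exact hull_perm' _ _ ⟨![0,2,1],![0,2,1],by decide,by decide⟩
      (sorted_core m1 m2 m3 (x 0) (x 2) (x 1) hm h12 h23 (by linarith) (by linarith)
        (by linarith) (by linarith) (by linarith))
  · exact hull_perm' _ _ ⟨![0,2,1],![0,2,1],by decide,by decide⟩
      (sorted_core m1 m2 m3 (x 0) (x 2) (x 1) hm h12 h23 (by linarith) (by linarith)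
        (by linarith) (by linarith) (by linarith))
  · exact hull_perm' _ _ (Equiv.refl _)
      (sorted_core m1 m2 m3 (x 0) (x 1) (x 2) hm h12 h23 (by linarith) (by linarith)
        (by linarith) (by linarith) (by linarith))

lemma box_hull_aux (μ : Fin 3 → ℝ) (τ : Equiv.Perm (Fin 3)) (a b c : ℝ)
    (he : (fun i => μ (τ i)) = ![a, b, c])
    (hm : a + b + c = 0) (hab : b ≤ a) (hbc : c ≤ b)
    (x : Fin 3 → ℝ) (hx : x 0 + x 1 + x 2 = 0)
    (hlb : ∀ i, c ≤ x i) (hub : ∀ i, x i ≤ a) :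
    x ∈ convexHull ℝ (orb μ) := by
  rw [← orb_perm_eq μ τ, he]
  exact box_sub_hull a b c hm hab hbc x hx hlb hub

lemma box_hull (μ : Fin 3 → ℝ) (hμ : μ 0 + μ 1 + μ 2 = 0)
    (x : Fin 3 → ℝ) (hx : x 0 + x 1 + x 2 = 0)
    (hlb : ∀ i, min (μ 0) (min (μ 1) (μ 2)) ≤ x i)
    (hub : ∀ i, x i ≤ max (μ 0) (max (μ 1) (μ 2))) :
    x ∈ convexHull ℝ (orb μ) := by
  rcases le_total (μ 0) (μ 1) with h01 | h01 <;>
  rcases le_total (μ 0) (μ 2) with h02 | h02 <;>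
  rcases le_total (μ 1) (μ 2) with h12 | h12
  · exact box_hull_aux μ ⟨![2,1,0],![2,1,0],by decide,by decide⟩ (μ 2) (μ 1) (μ 0)
      (by funext i; fin_cases i <;> rfl) (by linarith) (by linarith) (by linarith) x hx
      (fun i => le_trans (le_min (by linarith) (le_min (by linarith) (by linarith))) (hlb i))
      (fun i => le_trans (hub i) (max_le (by linarith) (max_le (by linarith) (by linarith))))
  · exact box_hull_aux μ ⟨![1,2,0],![2,0,1],by decide,by decide⟩ (μ 1) (μ 2) (μ 0)
      (by funext i; fin_cases i <;> rfl) (by linarith) (by linarith) (by linarith) x hx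
      (fun i => le_trans (le_min (by linarith) (le_min (by linarith) (by linarith))) (hlb i))
      (fun i => le_trans (hub i) (max_le (by linarith) (max_le (by linarith) (by linarith))))
  · exact box_hull_aux μ ⟨![1,2,0],![2,0,1],by decide,by decide⟩ (μ 1) (μ 2) (μ 0)
      (by funext i; fin_cases i <;> rfl) (by linarith) (by linarith) (by linarith) x hx
      (fun i => le_trans (le_min (by linarith) (le_min (by linarith) (by linarith))) (hlb i))
      (fun i => le_trans (hub i) (max_le (by linarith) (max_le (by linarith) (by linarith))))
  · exact box_hull_aux μ ⟨![1,0,2],![1,0,2],by decide,by decide⟩ (μ 1) (μ 0) (μ 2)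
      (by funext i; fin_cases i <;> rfl) (by linarith) (by linarith) (by linarith) x hx
      (fun i => le_trans (le_min (by linarith) (le_min (by linarith) (by linarith))) (hlb i))
      (fun i => le_trans (hub i) (max_le (by linarith) (max_le (by linarith) (by linarith))))
  · exact box_hull_aux μ ⟨![2,0,1],![1,2,0],by decide,by decide⟩ (μ 2) (μ 0) (μ 1)
      (by funext i; fin_cases i <;> rfl) (by linarith) (by linarith) (by linarith) x hx
      (fun i => le_trans (le_min (by linarith) (le_min (by linarith) (by linarith))) (hlb i))
      (fun i => le_trans (hub i) (max_le (by linarith) (max_le (by linarith) (by linarith))))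
  · exact box_hull_aux μ (Equiv.refl _) (μ 0) (μ 1) (μ 2)
      (by funext i; fin_cases i <;> rfl) (by linarith) (by linarith) (by linarith) x hx
      (fun i => le_trans (le_min (by linarith) (le_min (by linarith) (by linarith))) (hlb i))
      (fun i => le_trans (hub i) (max_le (by linarith) (max_le (by linarith) (by linarith))))
  · exact box_hull_aux μ ⟨![0,2,1],![0,2,1],by decide,by decide⟩ (μ 0) (μ 2) (μ 1)
      (by funext i; fin_cases i <;> rfl) (by linarith) (by linarith) (by linarith) x hx
      (fun i => le_trans (le_min (by linarith) (le_min (by linarith) (by linarith))) (hlb i))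
      (fun i => le_trans (hub i) (max_le (by linarith) (max_le (by linarith) (by linarith))))
  · exact box_hull_aux μ (Equiv.refl _) (μ 0) (μ 1) (μ 2)
      (by funext i; fin_cases i <;> rfl) (by linarith) (by linarith) (by linarith) x hx
      (fun i => le_trans (le_min (by linarith) (le_min (by linarith) (by linarith))) (hlb i))
      (fun i => le_trans (hub i) (max_le (by linarith) (max_le (by linarith) (by linarith))))

lemma hull_sub (m : Fin 3 → ℝ) (hm : m 0 + m 1 + m 2 = 0) (a b : ℝ)
    (ha : ∀ i, a ≤ m i) (hb : ∀ i, m i ≤ b) :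
    convexHull ℝ (orb m) ⊆
      {x : Fin 3 → ℝ | x 0 + x 1 + x 2 = 0 ∧ ∀ i, a ≤ x i ∧ x i ≤ b} := by
  apply convexHull_min
  · rintro x ⟨σ, hσ⟩
    refine ⟨?_, fun i => by rw [hσ i]; exact ⟨ha _, hb _⟩⟩
    have h := Equiv.sum_comp σ m
    rw [Fin.sum_univ_three, Fin.sum_univ_three] at h
    rw [hσ 0, hσ 1, hσ 2]
    linarith
  · intro x hx y hy s t hs ht hst
    refine ⟨?_, fun i => ⟨?_, ?_⟩⟩
    · have := hx.1; have := hy.1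
      simp only [Pi.add_apply, Pi.smul_apply, smul_eq_mul]
      nlinarith
    · have h1 := (hx.2 i).1; have h2 := (hy.2 i).1
      simp only [Pi.add_apply, Pi.smul_apply, smul_eq_mul]
      linarith [mul_le_mul_of_nonneg_left h1 hs, mul_le_mul_of_nonneg_left h2 ht,
        (by linear_combination a * hst : s*a + t*a = a)]
    · have h1 := (hx.2 i).2; have h2 := (hy.2 i).2
      simp only [Pi.add_apply, Pi.smul_apply, smul_eq_mul]
      linarith [mul_le_mul_of_nonneg_left h1 hs, mul_le_mul_of_nonneg_left h2 ht,
        (by linear_combination b * hst : s*b + t*b = b)]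

/-- projection along α = (1,-1,0) of the lattice points of the convex
hull of an S₃-Weyl orbit of μ in the sum-zero lattice hits every point of
p_α(L^∨) ∩ p_α(Conv(Wμ)). -/
theorem stmt_0 (μ : Fin 3 → ℤ) (hμ : μ 0 + μ 1 + μ 2 = 0)
    (pα : (Fin 3 → ℝ) → (Fin 3 → ℝ))
    (hpα : ∀ x, pα x = ![(x 0 + x 1) / 2, (x 0 + x 1) / 2, x 2])
    (C : Set (Fin 3 → ℝ))
    (hC : C = convexHull ℝ
      {x : Fin 3 → ℝ | ∃ σ : Equiv.Perm (Fin 3), ∀ i, x i = (μ (σ i) : ℝ)})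
    (y : Fin 3 → ℝ)
    (hy1 : ∃ w : Fin 3 → ℤ, w 0 + w 1 + w 2 = 0 ∧ y = pα (fun i => (w i : ℝ)))
    (hy2 : y ∈ pα '' C) :
    ∃ z : Fin 3 → ℤ, z 0 + z 1 + z 2 = 0 ∧
      (fun i => (z i : ℝ)) ∈ C ∧ pα (fun i => (z i : ℝ)) = y := by
  obtain ⟨w, hw, hyw⟩ := hy1
  obtain ⟨c, hcC, hpc⟩ := hy2
  have hC' : C = convexHull ℝ (orb (fun i => (μ i : ℝ))) := hC
  set ν : Fin 3 → ℝ := fun i => (μ i : ℝ) with hν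
  set A : ℤ := min (μ 0) (min (μ 1) (μ 2)) with hA
  set B : ℤ := max (μ 0) (max (μ 1) (μ 2)) with hB
  have hνsum : ν 0 + ν 1 + ν 2 = 0 := by simp only [hν]; exact_mod_cast hμ
  have hνa : ∀ i, (A : ℝ) ≤ ν i := by
    intro i
    have : A ≤ μ i := by fin_cases i <;> simp [hA] <;> omega
    exact_mod_cast Int.cast_le.mpr this
  have hνb : ∀ i, ν i ≤ (B : ℝ) := by
    intro i
    have : μ i ≤ B := by fin_cases i <;> simp [hB] <;> omega
    exact_mod_cast Int.cast_le.mpr this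
  rw [hC'] at hcC
  have hbox := hull_sub ν hνsum (A : ℝ) (B : ℝ) hνa hνb hcC
  have hcsum : c 0 + c 1 + c 2 = 0 := hbox.1
  have hpp : pα c = pα (fun i => (w i : ℝ)) := by rw [hpc, hyw]
  rw [hpα, hpα] at hpp
  set k : ℤ := w 2 with hk
  have hc2 : c 2 = (k : ℝ) := by
    have := congrFun hpp 2
    simpa using this
  have hc01 : c 0 + c 1 = -(k : ℝ) := by linarith
  have hAk : A ≤ k := by
    have := (hbox.2 2).1
    rw [hc2] at this
    exact_mod_cast this
  have hkB : k ≤ B := by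
    have := (hbox.2 2).2
    rw [hc2] at this
    exact_mod_cast this
  have h2A : 2 * A ≤ -k := by
    have h0 := (hbox.2 0).1
    have h1 := (hbox.2 1).1
    have h : (2 * A : ℝ) ≤ ((-k : ℤ) : ℝ) := by push_cast; linarith
    exact_mod_cast h
  have h2B : -k ≤ 2 * B := by
    have h0 := (hbox.2 0).2
    have h1 := (hbox.2 1).2
    have h : ((-k : ℤ) : ℝ) ≤ ((2 * B : ℤ) : ℝ) := by push_cast; linarith
    exact_mod_cast h
  obtain ⟨t, htA, htB, ht1, ht2⟩ :
      ∃ t : ℤ, A ≤ t ∧ t ≤ B ∧ A ≤ -k - t ∧ -k - t ≤ B := by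
    refine ⟨max A (-k - B), le_max_left _ _, max_le (by omega) (by omega), ?_, ?_⟩
    · have : max A (-k - B) ≤ -k - A := max_le (by omega) (by omega)
      omega
    · have := le_max_right A (-k - B)
      omega
  refine ⟨![t, -k - t, k], by show t + (-k - t) + k = 0; ring, ?_, ?_⟩
  · rw [hC']
    apply box_hull ν hνsum
    · simp only [Matrix.cons_val_zero, Matrix.cons_val_one, Matrix.head_cons,
        Matrix.cons_val_two, Matrix.tail_cons]
      push_cast
      ring
    · intro i
      have hmin : min (ν 0) (min (ν 1) (ν 2)) = (A : ℝ) := by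
        simp only [hν, hA]; push_cast; rfl
      rw [hmin]
      fin_cases i
      · simpa using (Int.cast_le.mpr htA : (A:ℝ) ≤ (t:ℝ))
      · simpa using (Int.cast_le.mpr ht1 : (A:ℝ) ≤ ((-k - t : ℤ):ℝ))
      · simpa using (Int.cast_le.mpr hAk : (A:ℝ) ≤ (k:ℝ))
    · intro i
      have hmax : max (ν 0) (max (ν 1) (ν 2)) = (B : ℝ) := by
        simp only [hν, hB]; push_cast; rfl
      rw [hmax]
      fin_cases i
      · simpa using (Int.cast_le.mpr htB : (t:ℝ) ≤ (B:ℝ))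
      · simpa using (Int.cast_le.mpr ht2 : ((-k - t : ℤ):ℝ) ≤ (B:ℝ))
      · simpa using (Int.cast_le.mpr hkB : (k:ℝ) ≤ (B:ℝ))
  · rw [hyw, hpα, hpα]
    have hw01 : (w 0 : ℝ) + (w 1 : ℝ) = -(k : ℝ) := by
      have h : ((w 0 + w 1 + w 2 : ℤ) : ℝ) = 0 := by exact_mod_cast congrArg (Int.cast : ℤ → ℝ) hw
      push_cast at h
      rw [hk]; push_cast; linarith
    funext i
    fin_cases i <;> simp <;> push_cast <;> linarith
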